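/- Let G=(V,E) be a locally finite graph, let η ∈ {0,1}^E be any configuration, let Λ be the set of furcations of η, and let S ⊆ V be finite. Then 𝒫_η(S → ∞) ≥ |Λ ∩ S|. -/

import Mathlib

open MeasureTheory Filter Set
open scoped ENNReal

namespace Percolation

variable {V : Type*}

/-- The graph spanned by the open edges of a configuration `ω : Sym2 V → Bool`. -/
def openGraph (G : SimpleGraph V) (ω : Sym2 V → Bool) : SimpleGraph V where
  Adj u w := G.Adj u w ∧ ω s(u, w) = true
  symm := by
    constructor
    intro u w h
    exact ⟨h.1.symm, by rw [Sym2.eq_swap]; exact h.2⟩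
  loopless := ⟨fun u h => G.loopless.irrefl u h.1⟩

/-- The open cluster of the vertex `v` in the configuration `ω`. -/
def cluster (G : SimpleGraph V) (ω : Sym2 V → Bool) (v : V) : Set V :=
  {u | (openGraph G ω).Reachable v u}

/-- The set `E(S)` of edges of `G` with at least one endpoint in `S`. -/
def touchingEdges (G : SimpleGraph V) (S : Set V) : Set (Sym2 V) :=
  {e | e ∈ G.edgeSet ∧ ∃ u ∈ S, u ∈ e}

/-- The set `E(K_v)` of edges of `G` with at least one endpoint in the cluster of `v`. -/
def clusterEdges (G : SimpleGraph V) (ω : Sym2 V → Bool) (v : V) : Set (Sym2 V) :=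
  touchingEdges G (cluster G ω v)

/-- `μ` is the law of Bernoulli-`p` bond percolation on `G`: it is a probability measure on
configurations under which the states of the edges of `G` are independent, each edge being
open with probability `p`.  (This characterizes `μ` on all events depending only on the states
of the edges of `G`.) -/
def IsBernoulli (G : SimpleGraph V) (p : ℝ) (μ : Measure (Sym2 V → Bool)) : Prop :=
  IsProbabilityMeasure μ ∧
    ∀ s : Finset (Sym2 V), ↑s ⊆ G.edgeSet → ∀ f : Sym2 V → Bool,
      μ {ω | ∀ e ∈ s, ω e = f e} =
        ENNReal.ofReal (p ^ (s.filter fun e => f e = true).card *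
          (1 - p) ^ (s.filter fun e => f e = false).card)

/-- The critical probability of `G`. -/
noncomputable def pc (G : SimpleGraph V) : ℝ :=
  sInf {p : ℝ | 0 ≤ p ∧ p ≤ 1 ∧
    ∀ μ : Measure (Sym2 V → Bool), IsBernoulli G p μ →
      μ {ω | ∃ u : V, (cluster G ω u).Infinite} = 1}

/-- `ζ(p) = -limsup (1/n) log P_p(n ≤ E_v < ∞)`, where `μ` is Bernoulli-`p` percolation. -/
noncomputable def zeta (G : SimpleGraph V) (v : V) (μ : Measure (Sym2 V → Bool)) : ℝ :=
  - Filter.limsup (fun n : ℕ =>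
      Real.log (μ {ω | (n : ℕ∞) ≤ (clusterEdges G ω v).encard ∧
        (clusterEdges G ω v).encard < ⊤}).toReal / (n : ℝ)) Filter.atTop

/-- A graph is (vertex-)transitive if its automorphism group acts transitively. -/
def IsTransitive (G : SimpleGraph V) : Prop :=
  ∀ u w : V, ∃ φ : G ≃g G, φ u = w

/-- A graph is quasi-transitive if its automorphism group has finitely many vertex orbits. -/
def IsQuasiTransitive (G : SimpleGraph V) : Prop :=
  ∃ S : Finset V, ∀ u : V, ∃ φ : G ≃g G, φ u ∈ S

/-- The volume `∑_{u ∈ K} deg(u)` of a set of vertices. -/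
noncomputable def vol (G : SimpleGraph V) (K : Set V) : ℝ :=
  ∑ᶠ u ∈ K, ((G.neighborSet u).ncard : ℝ)

/-- The edge boundary `∂_E K`: edges with exactly one endpoint in `K`. -/
def edgeBoundary (G : SimpleGraph V) (K : Set V) : Set (Sym2 V) :=
  {e | e ∈ G.edgeSet ∧ ∃ u w : V, e = s(u, w) ∧ u ∈ K ∧ w ∉ K}

/-- The Cheeger constant `Φ_E(G)`. -/
noncomputable def cheeger (G : SimpleGraph V) : ℝ :=
  sInf {r : ℝ | ∃ K : Set V, K.Finite ∧ K.Nonempty ∧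
    r = ((edgeBoundary G K).ncard : ℝ) / vol G K}

/-- A graph is nonamenable if its Cheeger constant is positive. -/
def Nonamenable (G : SimpleGraph V) : Prop := 0 < cheeger G

/-- The anchored Cheeger constant `Φ*_E` of (the component of `v` in) `H`, anchored at `v`. -/
noncomputable def anchoredCheeger (H : SimpleGraph V) (v : V) : ℝ :=
  ⨆ n : ℕ, sInf {r : ℝ | ∃ K : Set V, v ∈ K ∧ K.Finite ∧ n ≤ K.ncard ∧
    (SimpleGraph.induce K H).Connected ∧
    r = ((edgeBoundary H K).ncard : ℝ) / vol H K}

/-- The cluster of `v`, viewed as a subgraph of `G`. -/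
def clusterSubgraph (G : SimpleGraph V) (ω : Sym2 V → Bool) (v : V) : G.Subgraph where
  verts := cluster G ω v
  Adj u w := (openGraph G ω).Adj u w ∧ u ∈ cluster G ω v ∧ w ∈ cluster G ω v
  adj_sub h := (h.1 : G.Adj _ _ ∧ _).1
  edge_vert h := h.2.1
  symm := ⟨fun u w h => ⟨h.1.symm, h.2.2, h.2.1⟩⟩

/-- Membership in `𝓗_v`: finite connected subgraphs of `G` containing `v`. -/
def HSetMem (G : SimpleGraph V) (v : V) (H : G.Subgraph) : Prop :=
  v ∈ H.verts ∧ H.verts.Finite ∧ H.Connected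

/-- `F : 𝓗_v → ℂ` has subexponential growth:
`limsup (1/n) log sup {|F(H)| : H ∈ 𝓗_v, |E(H)| ≤ n} ≤ 0`. -/
def SubexpGrowth (G : SimpleGraph V) (v : V) (F : G.Subgraph → ℂ) : Prop :=
  Filter.limsup (fun n : ℕ =>
    Real.log (sSup {r : ℝ | ∃ H : G.Subgraph, HSetMem G v H ∧
      (touchingEdges G H.verts).ncard ≤ n ∧ r = ‖F H‖}) / (n : ℝ))
    Filter.atTop ≤ 0

-- The configuration `ω` with the edge `e` opened, i.e. `ω^e`.
open Classical in
noncomputable def updOpen (ω : Sym2 V → Bool) (e : Sym2 V) : Sym2 V → Bool :=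
  fun e' => if e' = e then true else ω e'

/-- The fluctuation `h_p(K_v) = p|∂K_v| - (1-p)|E_o(K_v)|` of the cluster of `v`. -/
noncomputable def fluct (G : SimpleGraph V) (p : ℝ) (ω : Sym2 V → Bool) (v : V) : ℝ :=
  p * ({e | e ∈ clusterEdges G ω v ∧ ω e = false}.ncard : ℝ) -
    (1 - p) * ({e | e ∈ clusterEdges G ω v ∧ ω e = true}.ncard : ℝ)

/-- `Piv(H,v,W)`: edges of `H` whose deletion disconnects `v` from some vertex of `W`. -/
def Piv (H : SimpleGraph V) (v : V) (W : Set V) : Set (Sym2 V) :=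
  {e | e ∈ H.edgeSet ∧ ∃ w ∈ W, ¬ (H.deleteEdges {e}).Reachable v w}

/-- `Br_k(K_v, v) = max {|Piv(K_v,v,W)| : W ⊆ K_v, |W| ≤ k}`. -/
noncomputable def Br (G : SimpleGraph V) (ω : Sym2 V → Bool) (v : V) (k : ℕ) : ℕ :=
  sSup {m : ℕ | ∃ W : Finset V, ↑W ⊆ cluster G ω v ∧ W.card ≤ k ∧
    m = (Piv (openGraph G ω) v ↑W).ncard}

/-- `𝒫_ω(S → ∞)`: the minimal number of edges whose removal disconnects `S` from infinity
in the open subgraph of `ω`. -/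
noncomputable def minCut (G : SimpleGraph V) (ω : Sym2 V → Bool) (S : Set V) : ℕ∞ :=
  ⨅ C ∈ {C : Set (Sym2 V) |
    ∀ s ∈ S, {u | ((openGraph G ω).deleteEdges C).Reachable s u}.Finite}, C.encard

/-- `v` is a furcation of `ω`: closing all edges incident to `v` splits the cluster of `v`
into at least three distinct infinite connected components. -/
def IsFurcation (G : SimpleGraph V) (ω : Sym2 V → Bool) (v : V) : Prop :=
  ∃ u1 u2 u3 : V,
    (openGraph G ω).Adj v u1 ∧ (openGraph G ω).Adj v u2 ∧ (openGraph G ω).Adj v u3 ∧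
    ¬ ((openGraph G ω).deleteEdges {e | v ∈ e}).Reachable u1 u2 ∧
    ¬ ((openGraph G ω).deleteEdges {e | v ∈ e}).Reachable u1 u3 ∧
    ¬ ((openGraph G ω).deleteEdges {e | v ∈ e}).Reachable u2 u3 ∧
    {x | ((openGraph G ω).deleteEdges {e | v ∈ e}).Reachable u1 x}.Infinite ∧
    {x | ((openGraph G ω).deleteEdges {e | v ∈ e}).Reachable u2 x}.Infinite ∧
    {x | ((openGraph G ω).deleteEdges {e | v ∈ e}).Reachable u3 x}.Infinite

-- The `n`-step transition probability of simple random walk on the graph `H`.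
open Classical in
noncomputable def walkProb (H : SimpleGraph V) : ℕ → V → V → ℝ
  | 0, u, w => if u = w then 1 else 0
  | n + 1, u, w => ∑ᶠ x ∈ H.neighborSet u, walkProb H n x w / ((H.neighborSet u).ncard : ℝ)

/-- Two vertices are `2`-connected in `H` if they are joined by two edge-disjoint paths. -/
def TwoConn (H : SimpleGraph V) (u w : V) : Prop :=
  ∃ p1 p2 : H.Walk u w, p1.IsPath ∧ p2.IsPath ∧ ∀ e ∈ p1.edges, e ∉ p2.edges

/-- An edge of `H` is a bridge if deleting it disconnects its endpoints. -/
def IsBridgeOf (H : SimpleGraph V) (e : Sym2 V) : Prop :=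
  e ∈ H.edgeSet ∧ ∃ u w : V, e = s(u, w) ∧ ¬ (H.deleteEdges {e}).Reachable u w

/-- `w` represents a leaf of the tree `Tr(K_v)` of `2`-connected components of the cluster of
`v`: it lies in the cluster, its `2`-connected component differs from that of `v`, and exactly
one bridge is incident to its `2`-connected component. -/
def IsTrLeaf (G : SimpleGraph V) (ω : Sym2 V → Bool) (v w : V) : Prop :=
  w ∈ cluster G ω v ∧ ¬ TwoConn (openGraph G ω) v w ∧
    {e : Sym2 V | IsBridgeOf (openGraph G ω) e ∧
      ∃ x ∈ e, TwoConn (openGraph G ω) x w}.encard = 1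

/-- `Lf_k(K_v, v)`: the maximum number of edges in a subgraph of `Tr(K_v)` spanned by the
union of the geodesics between the `2`-connected component of `v` and exactly `k` leaves
(`0` if `Tr(K_v)` has fewer than `k` leaves).  The tree edges of such a spanned subgraph are
exactly the bridges separating `v` from one of the chosen leaf representatives. -/
noncomputable def Lf (G : SimpleGraph V) (ω : Sym2 V → Bool) (v : V) (k : ℕ) : ℕ :=
  sSup {m : ℕ | ∃ w : Fin k → V, (∀ i, IsTrLeaf G ω v (w i)) ∧
    (∀ i j : Fin k, i ≠ j → ¬ TwoConn (openGraph G ω) (w i) (w j)) ∧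
    m = (⋃ i, Piv (openGraph G ω) v {w i}).ncard}

/-- `Q_k(p,n,m)`: the supremum over all countable locally finite graphs `G` and vertices `v`
of `P_p(Lf_k(K_v,v) = m and E_v = n)`. -/
noncomputable def Qk (k : ℕ) (p : ℝ) (n m : ℕ) : ℝ :=
  sSup {r : ℝ | ∃ (W : Type) (_ : Countable W) (G : SimpleGraph W) (v : W),
    (∀ u : W, (G.neighborSet u).Finite) ∧
    ∃ μ : Measure (Sym2 W → Bool), IsBernoulli G p μ ∧
      r = (μ {ω | Lf G ω v k = m ∧ (clusterEdges G ω v).encard = (n : ℕ∞)}).toReal}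

/-- `α(p) = sup {α ∈ [0,p] : α^{-α} (1-α)^{-(1-α)} (p/(1-p))^α < e^{ζ(p)}}`. -/
noncomputable def alphaP (G : SimpleGraph V) (v : V) (p : ℝ)
    (μ : Measure (Sym2 V → Bool)) : ℝ :=
  sSup {α : ℝ | 0 ≤ α ∧ α ≤ p ∧
    α ^ (-α) * (1 - α) ^ (-(1 - α)) * (p / (1 - p)) ^ α < Real.exp (zeta G v μ)}


section InequalityTwoTwo

open SimpleGraph

/-! ### Auxiliary material for inequality (2.2) -/

/-- The connected component (as a set of vertices) of `a` in the graph `H`. -/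
def compSet (H : SimpleGraph V) (a : V) : Set V := {b | H.Reachable a b}

open Classical in
/-- The configuration `η` with the edge `e` closed. -/
noncomputable def closeEdge (η : Sym2 V → Bool) (e : Sym2 V) : Sym2 V → Bool :=
  fun e' => if e' = e then false else η e'

lemma compSet_subset_of_reach {H : SimpleGraph V} {a b : V} (h : H.Reachable a b) :
    compSet H b ⊆ compSet H a := fun _ hz => h.trans hz

lemma walk_avoid {H : SimpleGraph V} {a b w : V} (p : H.Walk a b) (hs : w ∉ p.support) :
    (H.deleteEdges {f | w ∈ f}).Reachable a b := by
  refine ⟨p.toDeleteEdges _ fun e he hme => ?_⟩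
  revert he hme
  induction e using Sym2.ind with
  | _ c d =>
    intro he hme
    have hmem : w ∈ s(c, d) := hme
    rcases Sym2.mem_iff.mp hmem with rfl | rfl
    · exact hs (p.fst_mem_support_of_mem_edges he)
    · exact hs (p.snd_mem_support_of_mem_edges he)

lemma reach_avoid {H : SimpleGraph V} {a b w : V} (hw : ¬ H.Reachable a w)
    (hab : H.Reachable a b) : (H.deleteEdges {f | w ∈ f}).Reachable a b := by
  classical
  obtain ⟨p⟩ := hab
  exact walk_avoid p fun hs => hw ⟨p.takeUntil w hs⟩

lemma compSet_subset_delete2 {H : SimpleGraph V} {C E' : Set (Sym2 V)} {u w w' : V}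
    (hE' : ∀ f ∈ E', f ∈ C ∨ w ∈ f ∨ w' ∈ f)
    (hw : ¬ (H.deleteEdges C).Reachable u w) (hw' : ¬ (H.deleteEdges C).Reachable u w') :
    compSet (H.deleteEdges C) u ⊆ compSet (H.deleteEdges E') u := by
  intro z hz
  have h1 : ((H.deleteEdges C).deleteEdges {f | w ∈ f}).Reachable u z :=
    reach_avoid hw hz
  have hw'2 : ¬ ((H.deleteEdges C).deleteEdges {f | w ∈ f}).Reachable u w' :=
    fun h => hw' (h.mono (deleteEdges_le _))
  have h2 := reach_avoid hw'2 h1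
  refine h2.mono ?_
  rw [deleteEdges_deleteEdges, deleteEdges_deleteEdges]
  refine deleteEdges_anti fun f hf => ?_
  have h := hE' f hf
  simp only [Set.mem_union, Set.mem_setOf_eq]
  tauto

lemma reach_or_of_deleteEdge {H : SimpleGraph V} (x y : V) {a b : V} (p : H.Walk a b) :
    (H.deleteEdges {s(x, y)}).Reachable a b ∨
      (H.deleteEdges {s(x, y)}).Reachable a x ∨ (H.deleteEdges {s(x, y)}).Reachable a y := by
  induction p with
  | nil => exact Or.inl (Reachable.refl _)
  | @cons a c b h q ih =>
    by_cases hc : s(a, c) = s(x, y)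
    · rcases Sym2.eq_iff.mp hc with ⟨rfl, rfl⟩ | ⟨rfl, rfl⟩
      · exact Or.inr (Or.inl (Reachable.refl _))
      · exact Or.inr (Or.inr (Reachable.refl _))
    · have hadj : (H.deleteEdges {s(x, y)}).Adj a c := by
        rw [deleteEdges_adj]
        exact ⟨h, by simpa using hc⟩
      rcases ih with h1 | h1 | h1
      · exact Or.inl (hadj.reachable.trans h1)
      · exact Or.inr (Or.inl (hadj.reachable.trans h1))
      · exact Or.inr (Or.inr (hadj.reachable.trans h1))

lemma reach_comp_cover {H : SimpleGraph V} (C : Set (Sym2 V)) {a b : V} (p : H.Walk a b) :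
    (H.deleteEdges C).Reachable a b ∨
      ∃ e ∈ C, ∃ z, z ∈ e ∧ (H.deleteEdges C).Reachable z b := by
  induction p with
  | nil => exact Or.inl (Reachable.refl _)
  | @cons a c b h q ih =>
    by_cases hc : s(a, c) ∈ C
    · right
      rcases ih with h1 | h1
      · exact ⟨s(a, c), hc, c, Sym2.mem_mk_right _ _, h1⟩
      · exact h1
    · have hadj : (H.deleteEdges C).Adj a c := by
        rw [deleteEdges_adj]; exact ⟨h, hc⟩
      rcases ih with h1 | h1
      · exact Or.inl (hadj.reachable.trans h1)
      · exact Or.inr h1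

lemma IsFurcation.compSet_infinite {G : SimpleGraph V} {η : Sym2 V → Bool} {w : V}
    (h : IsFurcation G η w) : (compSet (openGraph G η) w).Infinite := by
  obtain ⟨u1, _, _, h1, _, _, _, _, _, hi1, _, _⟩ := h
  refine hi1.mono fun z hz => ?_
  exact h1.reachable.trans (hz.mono (deleteEdges_le _))

lemma finite_setOf_mem_sym2 (e : Sym2 V) : {z : V | z ∈ e}.Finite := by
  induction e using Sym2.ind with
  | _ a b =>
    refine ((Set.finite_singleton a).union (Set.finite_singleton b)).subset ?_
    intro z hz
    rcases Sym2.mem_iff.mp hz with rfl | rfl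
    · exact Or.inl rfl
    · exact Or.inr rfl

lemma exists_boundary_edge {G : SimpleGraph V} {η : Sym2 V → Bool} {C : Set (Sym2 V)}
    (hC : C.Finite) {v : V} (hv : IsFurcation G η v)
    (hvfin : (compSet ((openGraph G η).deleteEdges C) v).Finite) :
    ∃ e ∈ C, ∃ z, z ∈ e ∧ (compSet ((openGraph G η).deleteEdges C) z).Infinite := by
  by_contra hcon
  push_neg at hcon
  have hfin : (compSet (openGraph G η) v).Finite := by
    have hcover : compSet (openGraph G η) v ⊆
        compSet ((openGraph G η).deleteEdges C) v ∪
          ⋃ e ∈ C, ⋃ z ∈ {z : V | z ∈ e}, compSet ((openGraph G η).deleteEdges C) z := by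
      intro b hb
      obtain ⟨p⟩ := hb
      rcases reach_comp_cover C p with h | ⟨e, he, z, hz, h⟩
      · exact Or.inl h
      · exact Or.inr (Set.mem_biUnion he (Set.mem_biUnion hz h))
    refine (hvfin.union ?_).subset hcover
    refine hC.biUnion fun e he => ?_
    refine (finite_setOf_mem_sym2 e).biUnion fun z hz => ?_
    exact hcon e he z hz
  exact hv.compSet_infinite hfin

lemma openGraph_close (G : SimpleGraph V) (η : Sym2 V → Bool) (e : Sym2 V) :
    openGraph G (closeEdge η e) =
      (openGraph G η).deleteEdges {e} := by
  classical
  ext u w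
  show (G.Adj u w ∧ closeEdge η e s(u, w) = true) ↔ _
  rw [deleteEdges_adj]
  show _ ↔ (G.Adj u w ∧ η s(u, w) = true) ∧ s(u, w) ∉ ({e} : Set (Sym2 V))
  by_cases h : s(u, w) = e <;> simp [closeEdge, h]

lemma pick_branch {H : SimpleGraph V} (P : V → Prop) {u1 u2 u3 : V} (a b : V)
    (h12 : ¬ H.Reachable u1 u2) (h13 : ¬ H.Reachable u1 u3) (h23 : ¬ H.Reachable u2 u3)
    (h1 : P u1) (h2 : P u2) (h3 : P u3) :
    ∃ u, P u ∧ ¬ H.Reachable u a ∧ ¬ H.Reachable u b := by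
  have link : ∀ {p q c : V}, ¬ H.Reachable p q → H.Reachable p c → H.Reachable q c → False :=
    fun h hp hq => h (hp.trans hq.symm)
  by_contra hcon
  push_neg at hcon
  have c1 := or_iff_not_imp_left.mpr (hcon u1 h1)
  have c2 := or_iff_not_imp_left.mpr (hcon u2 h2)
  have c3 := or_iff_not_imp_left.mpr (hcon u3 h3)
  rcases c1 with h1a | h1b <;> rcases c2 with h2a | h2b <;> rcases c3 with h3a | h3b
  · exact link h12 h1a h2a
  · exact link h12 h1a h2a
  · exact link h13 h1a h3a
  · exact link h23 h2b h3b
  · exact link h23 h2a h3a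
  · exact link h13 h1b h3b
  · exact link h12 h1b h2b
  · exact link h12 h1b h2b

lemma damage {G : SimpleGraph V} {η : Sym2 V → Bool} {C : Set (Sym2 V)} {x y w : V}
    (heC : s(x, y) ∈ C)
    (hyinf : (compSet ((openGraph G η).deleteEdges C) y).Infinite)
    (hw : IsFurcation G η w)
    (hwfin : (compSet ((openGraph G η).deleteEdges C) w).Finite)
    (hwx : w ≠ x)
    (hw' : ¬ IsFurcation G (closeEdge η s(x, y)) w) :
    (compSet ((openGraph G η).deleteEdges ({f | w ∈ f} ∪ {s(x, y)})) x).Finite ∧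
      ∃ u, ((openGraph G η).deleteEdges {s(x, y)}).Adj w u ∧
        ((openGraph G η).deleteEdges ({f | w ∈ f} ∪ {s(x, y)})).Reachable x u := by
  classical
  have hwy : w ≠ y := by
    rintro rfl
    exact hyinf hwfin
  have hywC : ¬ ((openGraph G η).deleteEdges C).Reachable y w := by
    intro h
    exact (hyinf.mono (compSet_subset_of_reach h.symm)) hwfin
  have hPy :
      (compSet ((openGraph G η).deleteEdges ({f | w ∈ f} ∪ {s(x, y)})) y).Infinite := by
    refine hyinf.mono (compSet_subset_delete2 (fun f hf => ?_) hywC hywC)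
    rcases hf with hf | hf
    · exact Or.inr (Or.inl hf)
    · refine Or.inl ?_
      rw [Set.mem_singleton_iff.mp hf]
      exact heC
  have hne_i : ∀ u : V, (openGraph G η).Adj w u → s(w, u) ≠ s(x, y) := by
    intro u _ h
    rcases Sym2.eq_iff.mp h with ⟨h1, _⟩ | ⟨h1, _⟩
    · exact hwx h1
    · exact hwy h1
  have survive :
      ((compSet ((openGraph G η).deleteEdges ({f | w ∈ f} ∪ {s(x, y)})) x).Infinite ∨
        ∀ u, ((openGraph G η).deleteEdges {s(x, y)}).Adj w u →
          ¬ ((openGraph G η).deleteEdges ({f | w ∈ f} ∪ {s(x, y)})).Reachable x u) →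
      False := by
    intro hcase
    refine hw' ?_
    have hkey : ∀ u : V, (openGraph G η).Adj w u →
        ({z | ((openGraph G η).deleteEdges {e | w ∈ e}).Reachable u z}).Infinite →
        (compSet ((openGraph G η).deleteEdges ({f | w ∈ f} ∪ {s(x, y)})) u).Infinite := by
      intro u hu hKinf
      have hadj' : ((openGraph G η).deleteEdges {s(x, y)}).Adj w u := by
        rw [deleteEdges_adj]
        exact ⟨hu, by simpa using hne_i u hu⟩
      by_cases hx : ((openGraph G η).deleteEdges ({f | w ∈ f} ∪ {s(x, y)})).Reachable u x
      · rcases hcase with hc | hc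
        · exact hc.mono (compSet_subset_of_reach hx)
        · exact absurd hx.symm (hc u hadj')
      · by_cases hy : ((openGraph G η).deleteEdges ({f | w ∈ f} ∪ {s(x, y)})).Reachable u y
        · exact hPy.mono (compSet_subset_of_reach hy)
        · refine hKinf.mono ?_
          intro z hz
          obtain ⟨p⟩ := hz
          have heq : ((openGraph G η).deleteEdges {f | w ∈ f}).deleteEdges {s(x, y)} =
              (openGraph G η).deleteEdges ({f | w ∈ f} ∪ {s(x, y)}) :=
            deleteEdges_deleteEdges _ _
          rcases reach_or_of_deleteEdge x y p with h | h | h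
          · exact heq ▸ h
          · exact absurd (heq ▸ h) hx
          · exact absurd (heq ▸ h) hy
    obtain ⟨u1, u2, u3, ha1, ha2, ha3, hn12, hn13, hn23, hi1, hi2, hi3⟩ := hw
    have hOG : openGraph G (closeEdge η s(x, y)) =
        (openGraph G η).deleteEdges {s(x, y)} := openGraph_close G η _
    have hDel : (((openGraph G η).deleteEdges {s(x, y)}).deleteEdges {e | w ∈ e}) =
        (openGraph G η).deleteEdges ({f | w ∈ f} ∪ {s(x, y)}) := by
      rw [deleteEdges_deleteEdges, Set.union_comm]
    have hle : (openGraph G η).deleteEdges ({f | w ∈ f} ∪ {s(x, y)}) ≤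
        (openGraph G η).deleteEdges {e | w ∈ e} :=
      deleteEdges_anti Set.subset_union_left
    refine ⟨u1, u2, u3, ?_, ?_, ?_, ?_, ?_, ?_, ?_, ?_, ?_⟩
    · rw [hOG, deleteEdges_adj]
      exact ⟨ha1, by simpa using hne_i u1 ha1⟩
    · rw [hOG, deleteEdges_adj]
      exact ⟨ha2, by simpa using hne_i u2 ha2⟩
    · rw [hOG, deleteEdges_adj]
      exact ⟨ha3, by simpa using hne_i u3 ha3⟩
    · rw [hOG, hDel]
      exact fun h => hn12 (h.mono hle)
    · rw [hOG, hDel]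
      exact fun h => hn13 (h.mono hle)
    · rw [hOG, hDel]
      exact fun h => hn23 (h.mono hle)
    · rw [hOG, hDel]
      exact hkey u1 ha1 hi1
    · rw [hOG, hDel]
      exact hkey u2 ha2 hi2
    · rw [hOG, hDel]
      exact hkey u3 ha3 hi3
  constructor
  · by_contra hfin
    exact survive (Or.inl hfin)
  · by_contra hne
    push_neg at hne
    exact survive (Or.inr hne)

lemma cross {G : SimpleGraph V} {η : Sym2 V → Bool} {x y w1 w2 : V}
    (hw2 : IsFurcation G η w2)
    (hne : w1 ≠ w2) (h2x : w2 ≠ x) (h2y : w2 ≠ y)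
    (hreach : ((openGraph G η).deleteEdges ({f | w1 ∈ f} ∪ {s(x, y)})).Reachable x w2) :
    (compSet ((openGraph G η).deleteEdges ({f | w1 ∈ f} ∪ {s(x, y)})) x).Infinite := by
  obtain ⟨u1, u2, u3, ha1, ha2, ha3, hn12, hn13, hn23, hi1, hi2, hi3⟩ := hw2
  obtain ⟨u, ⟨hu, hKinf⟩, hnw1, hnx⟩ :=
    pick_branch (fun u => (openGraph G η).Adj w2 u ∧
        ({z | ((openGraph G η).deleteEdges {e | w2 ∈ e}).Reachable u z}).Infinite)
      w1 x hn12 hn13 hn23 ⟨ha1, hi1⟩ ⟨ha2, hi2⟩ ⟨ha3, hi3⟩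
  have huw1 : u ≠ w1 := fun h => hnw1 (h ▸ Reachable.refl u)
  have hadjT : ((openGraph G η).deleteEdges ({f | w1 ∈ f} ∪ {s(x, y)})).Adj w2 u := by
    rw [deleteEdges_adj]
    refine ⟨hu, ?_⟩
    intro hf
    simp only [Set.mem_union, Set.mem_setOf_eq, Set.mem_singleton_iff] at hf
    rcases hf with hf | hf
    · rcases Sym2.mem_iff.mp hf with h | h
      · exact hne h
      · exact huw1 h.symm
    · rcases Sym2.eq_iff.mp hf with ⟨h1, _⟩ | ⟨h1, _⟩
      · exact h2x h1
      · exact h2y h1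
  have hsub : {z | ((openGraph G η).deleteEdges {e | w2 ∈ e}).Reachable u z} ⊆
      compSet ((openGraph G η).deleteEdges ({f | w1 ∈ f} ∪ {s(x, y)})) u := by
    refine compSet_subset_delete2 (fun f hf => ?_) hnw1 hnx
    simp only [Set.mem_union, Set.mem_setOf_eq, Set.mem_singleton_iff] at hf
    rcases hf with hf | rfl
    · exact Or.inr (Or.inl hf)
    · exact Or.inr (Or.inr (Sym2.mem_mk_left x y))
  refine hKinf.mono fun z hz => ?_
  exact hreach.trans (hadjT.reachable.trans (hsub hz))

lemma xcase {G : SimpleGraph V} {η : Sym2 V → Bool} {x y w2 : V}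
    (hadj : (openGraph G η).Adj x y)
    (hx : IsFurcation G η x) (h2x : w2 ≠ x) (h2y : w2 ≠ y) :
    (compSet ((openGraph G η).deleteEdges ({f | w2 ∈ f} ∪ {s(x, y)})) x).Infinite := by
  obtain ⟨v1, v2, v3, ha1, ha2, ha3, hn12, hn13, hn23, hi1, hi2, hi3⟩ := hx
  obtain ⟨v, ⟨hv, hLinf⟩, hnw2, hny⟩ :=
    pick_branch (fun u => (openGraph G η).Adj x u ∧
        ({z | ((openGraph G η).deleteEdges {e | x ∈ e}).Reachable u z}).Infinite)
      w2 y hn12 hn13 hn23 ⟨ha1, hi1⟩ ⟨ha2, hi2⟩ ⟨ha3, hi3⟩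
  have hvw2 : v ≠ w2 := fun h => hnw2 (h ▸ Reachable.refl v)
  have hvy : v ≠ y := fun h => hny (h ▸ Reachable.refl v)
  have hadjT : ((openGraph G η).deleteEdges ({f | w2 ∈ f} ∪ {s(x, y)})).Adj x v := by
    rw [deleteEdges_adj]
    refine ⟨hv, ?_⟩
    intro hf
    simp only [Set.mem_union, Set.mem_setOf_eq, Set.mem_singleton_iff] at hf
    rcases hf with hf | hf
    · rcases Sym2.mem_iff.mp hf with h | h
      · exact h2x h
      · exact hvw2 h.symm
    · rcases Sym2.eq_iff.mp hf with ⟨_, h2⟩ | ⟨h1, _⟩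
      · exact hvy h2
      · exact hadj.ne h1
  have hsub : {z | ((openGraph G η).deleteEdges {e | x ∈ e}).Reachable v z} ⊆
      compSet ((openGraph G η).deleteEdges ({f | w2 ∈ f} ∪ {s(x, y)})) v := by
    refine compSet_subset_delete2 (fun f hf => ?_) hnw2 hnw2
    simp only [Set.mem_union, Set.mem_setOf_eq, Set.mem_singleton_iff] at hf
    rcases hf with hf | rfl
    · exact Or.inr (Or.inl hf)
    · exact Or.inl (Sym2.mem_mk_left x y)
  refine hLinf.mono fun z hz => ?_
  exact hadjT.reachable.trans (hsub hz)

lemma patharg {H : SimpleGraph V} {E0 : Set (Sym2 V)} {x w1 w2 : V}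
    (hne : w1 ≠ w2) (h1x : w1 ≠ x)
    (hc1 : ¬ (H.deleteEdges ({f | w1 ∈ f} ∪ E0)).Reachable x w2)
    (hc2 : ¬ (H.deleteEdges ({f | w2 ∈ f} ∪ E0)).Reachable x w1)
    (hr : (H.deleteEdges E0).Reachable x w1) : False := by
  classical
  have havoid : ∀ (a b w : V) (p : (H.deleteEdges E0).Walk a b), w ∉ p.support →
      (H.deleteEdges ({f | w ∈ f} ∪ E0)).Reachable a b := by
    intro a b w p hs
    have h := walk_avoid p hs
    rw [deleteEdges_deleteEdges] at h
    exact h.mono (le_of_eq (by rw [Set.union_comm]))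
  obtain ⟨p⟩ := hr
  suffices hind : ∀ n (p : (H.deleteEdges E0).Walk x w1), p.length ≤ n → False from
    hind p.length p le_rfl
  intro n
  induction n with
  | zero =>
    intro p hp
    have hnil : p.Nil := Walk.nil_iff_length_eq.mpr (Nat.le_zero.mp hp)
    exact h1x hnil.eq.symm
  | succ n ih =>
    intro p hp
    have hw2s : w2 ∈ p.support := by
      by_contra hs
      exact hc2 (havoid _ _ _ p hs)
    have hw1s : w1 ∈ (p.takeUntil w2 hw2s).support := by
      by_contra hs
      exact hc1 (havoid _ _ _ _ hs)
    have hlen : (p.takeUntil w2 hw2s).length + (p.dropUntil w2 hw2s).length = p.length := by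
      rw [← Walk.length_append, Walk.take_spec]
    have hdpos : 0 < (p.dropUntil w2 hw2s).length := by
      rcases Nat.eq_zero_or_pos (p.dropUntil w2 hw2s).length with h | h
      · exact absurd (Walk.nil_iff_length_eq.mpr h).eq (fun hh => hne hh.symm)
      · exact h
    refine ih ((p.takeUntil w2 hw2s).takeUntil w1 hw1s) ?_
    have := Walk.length_takeUntil_le (p.takeUntil w2 hw2s) hw1s
    omega

lemma step_close (G : SimpleGraph V) (S : Set V) (η : Sym2 V → Bool) (C : Set (Sym2 V))
    (x y : V) (heC : s(x, y) ∈ C) (hCE : C ⊆ (openGraph G η).edgeSet)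
    (hyinf : (compSet ((openGraph G η).deleteEdges C) y).Infinite)
    (hcut : ∀ s ∈ S, (compSet ((openGraph G η).deleteEdges C) s).Finite) :
    ({u : V | IsFurcation G η u} ∩ S).encard ≤
      ({u : V | IsFurcation G (closeEdge η s(x, y)) u} ∩ S).encard
        + 1 := by
  classical
  have hadjxy : (openGraph G η).Adj x y := (openGraph G η).mem_edgeSet.mp (hCE heC)
  set η' := closeEdge η s(x, y) with hη'
  set A := {u : V | IsFurcation G η u} ∩ S with hA
  set B := {u : V | IsFurcation G η' u} ∩ S with hB
  have hsubset : A ⊆ B ∪ (A \ B) := by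
    intro z hz
    by_cases h : z ∈ B
    · exact Or.inl h
    · exact Or.inr ⟨hz, h⟩
  have hss : (A \ B).Subsingleton := by
    intro w1 hw1 w2 hw2
    by_contra hne
    obtain ⟨⟨hf1, hS1⟩, hnb1⟩ := hw1
    obtain ⟨⟨hf2, hS2⟩, hnb2⟩ := hw2
    have hnf1 : ¬ IsFurcation G η' w1 := fun h => hnb1 ⟨h, hS1⟩
    have hnf2 : ¬ IsFurcation G η' w2 := fun h => hnb2 ⟨h, hS2⟩
    have hfin1 := hcut w1 hS1
    have hfin2 := hcut w2 hS2
    have hwy1 : w1 ≠ y := by rintro rfl; exact hyinf hfin1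
    have hwy2 : w2 ≠ y := by rintro rfl; exact hyinf hfin2
    by_cases h1x : w1 = x
    · have h2x : w2 ≠ x := fun h => hne (h1x.trans h.symm)
      have hxf : IsFurcation G η x := h1x ▸ hf1
      exact (xcase hadjxy hxf h2x hwy2) (damage heC hyinf hf2 hfin2 h2x hnf2).1
    · by_cases h2x : w2 = x
      · have hxf : IsFurcation G η x := h2x ▸ hf2
        exact (xcase hadjxy hxf h1x hwy1) (damage heC hyinf hf1 hfin1 h1x hnf1).1
      · obtain ⟨hP1fin, a1, hadjA1, hrA1⟩ := damage heC hyinf hf1 hfin1 h1x hnf1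
        obtain ⟨hP2fin, a2, hadjA2, hrA2⟩ := damage heC hyinf hf2 hfin2 h2x hnf2
        have hc1 : ¬ ((openGraph G η).deleteEdges ({f | w1 ∈ f} ∪ {s(x, y)})).Reachable x w2 :=
          fun h => (cross hf2 hne h2x hwy2 h) hP1fin
        have hc2 : ¬ ((openGraph G η).deleteEdges ({f | w2 ∈ f} ∪ {s(x, y)})).Reachable x w1 :=
          fun h => (cross hf1 (fun hh => hne hh.symm) h1x hwy1 h) hP2fin
        have hr1 : ((openGraph G η).deleteEdges {s(x, y)}).Reachable x w1 :=
          (hrA1.mono (deleteEdges_anti Set.subset_union_right)).trans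
            hadjA1.symm.reachable
        exact patharg hne h1x hc1 hc2 hr1
  calc A.encard ≤ (B ∪ (A \ B)).encard := Set.encard_mono hsubset
    _ ≤ B.encard + (A \ B).encard := Set.encard_union_le _ _
    _ ≤ B.encard + 1 := by
        refine add_le_add_right ?_ _
        refine Set.encard_le_one_iff.mpr fun a b ha hb => hss ha hb
    _ = _ := rfl

lemma aux_count (G : SimpleGraph V) (S : Set V) :
    ∀ n : ℕ, ∀ (η : Sym2 V → Bool) (C : Set (Sym2 V)), C.Finite → C.ncard = n →
      C ⊆ (openGraph G η).edgeSet →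
      (∀ s ∈ S, (compSet ((openGraph G η).deleteEdges C) s).Finite) →
      ({u : V | IsFurcation G η u} ∩ S).encard ≤ (n : ℕ∞) := by
  classical
  intro n
  induction n with
  | zero =>
    intro η C hCf hC0 _ hcut
    have hCe : C = ∅ := (Set.ncard_eq_zero hCf).mp hC0
    have hempty : {u : V | IsFurcation G η u} ∩ S = ∅ := by
      ext w
      simp only [Set.mem_inter_iff, Set.mem_setOf_eq, Set.mem_empty_iff_false, iff_false,
        not_and]
      intro hwf hwS
      have hfin := hcut w hwS
      rw [hCe, deleteEdges_empty] at hfin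
      exact hwf.compSet_infinite hfin
    rw [hempty]
    simp
  | succ n ih =>
    intro η C hCf hCn hCE hcut
    by_cases hΛ : ({u : V | IsFurcation G η u} ∩ S) = ∅
    · rw [hΛ]; simp
    · obtain ⟨v, hvf, hvS⟩ := Set.nonempty_iff_ne_empty.mpr hΛ
      obtain ⟨e, heC, z, hze, hzinf⟩ := exists_boundary_edge hCf hvf (hcut v hvS)
      have main : ∀ x y : V, s(x, y) ∈ C →
          (compSet ((openGraph G η).deleteEdges C) y).Infinite →
          ({u : V | IsFurcation G η u} ∩ S).encard ≤ ((n + 1 : ℕ) : ℕ∞) := by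
        intro x y hxyC hyinf
        set η' := closeEdge η s(x, y) with hη'
        have hgraph : (openGraph G η').deleteEdges (C \ {s(x, y)}) =
            (openGraph G η).deleteEdges C := by
          rw [hη', openGraph_close, deleteEdges_deleteEdges,
            Set.union_diff_cancel (Set.singleton_subset_iff.mpr hxyC)]
        have hih : ({u : V | IsFurcation G η' u} ∩ S).encard ≤ (n : ℕ∞) := by
          refine ih η' (C \ {s(x, y)}) hCf.diff ?_ ?_ ?_
          · rw [Set.ncard_diff_singleton_of_mem hxyC, hCn]
            omega
          · intro c hc
            rw [hη', openGraph_close, edgeSet_deleteEdges]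
            exact ⟨hCE hc.1, hc.2⟩
          · intro s hs
            rw [hgraph]
            exact hcut s hs
        have hstep := step_close G S η C x y hxyC hCE hyinf hcut
        refine hstep.trans ?_
        have h2 : ({u : V | IsFurcation G η' u} ∩ S).encard + 1 ≤ (n : ℕ∞) + 1 :=
          add_le_add_left hih 1
        refine h2.trans_eq ?_
        simp [Nat.cast_add]
      obtain ⟨a, b, rfl⟩ : ∃ a b : V, e = s(a, b) :=
        Sym2.ind (fun a b => ⟨a, b, rfl⟩) e
      rcases Sym2.mem_iff.mp hze with rfl | rfl
      · refine main b z ?_ hzinf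
        rw [Sym2.eq_swap]
        exact heC
      · exact main a z heC hzinf

theorem furcations_le_minCut_aux
    (G : SimpleGraph V) (η : Sym2 V → Bool) (S : Set V) :
    ({u : V | IsFurcation G η u} ∩ S).encard ≤ minCut G η S := by
  classical
  refine le_iInf₂ fun C hC => ?_
  have hgraph : (openGraph G η).deleteEdges C =
      (openGraph G η).deleteEdges (C ∩ (openGraph G η).edgeSet) :=
    deleteEdges_eq_inter_edgeSet _
  by_cases hfin : (C ∩ (openGraph G η).edgeSet).Finite
  · have haux := aux_count G S (C ∩ (openGraph G η).edgeSet).ncard η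
      (C ∩ (openGraph G η).edgeSet) hfin rfl Set.inter_subset_right
      (fun s hs => by
        rw [← hgraph]
        exact hC s hs)
    refine haux.trans ?_
    rw [hfin.cast_ncard_eq]
    exact Set.encard_mono Set.inter_subset_left
  · have hCinf : C.Infinite := fun h => hfin (h.subset Set.inter_subset_left)
    rw [hCinf.encard_eq]
    exact le_top

end InequalityTwoTwo

/-- **Inequality (2.2).**  Let `G` be a locally finite graph, `η ∈ {0,1}^E` a
configuration, `Λ` the set of furcations of `η` and `S ⊆ V` finite.  Then
`𝒫_η(S → ∞) ≥ |Λ ∩ S|`. -/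
theorem furcations_le_minCut
    {V : Type*} (G : SimpleGraph V)
    (hlf : ∀ u : V, (G.neighborSet u).Finite)
    (η : Sym2 V → Bool) (S : Set V) (hS : S.Finite) :
    ({u : V | IsFurcation G η u} ∩ S).encard ≤ minCut G η S :=
  furcations_le_minCut_aux G η S

end Percolation
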